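/- Let a1, a2 > 0, b > −1, 0 < z < 1, and let L be the generalized-Hahn moment functional L[f] = Σ_{x=0}^{∞} f(x)·(a1)_x (a2)_x z^x / ((b+1)_x x!). Let (P_n)_{n≥0} be a monic orthogonal polynomial sequence for L with recurrence coefficients β_n, γ_n, let A_k(n), −2 ≤ k ≤ 2, be the unique coefficients in the expansion z(x+a1)(x+a2)·P_n(x+1) = Σ_{k=−2}^{2} A_k(n) P_{n+k}(x), and set u_n = β_n + β_{n−1} − n + b + 1, v_n = β_n + β_{n−1} + n − 1 + a1 + a2. Then for all n ≥ 0: A_0(n) = (u_{n+1} − z v_{n+1})γ_{n+1} − (u_n − z v_n)γ_n. -/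

import Mathlib

open Polynomial Filter

lemma hahn_w_succ (a1 a2 b z : ℝ) (ha1 : 0 < a1) (ha2 : 0 < a2) (hb : -1 < b)
    (w : ℕ → ℝ)
    (hw : ∀ x : ℕ, w x =
      (ascPochhammer ℝ x).eval a1 * (ascPochhammer ℝ x).eval a2 * z ^ x /
        ((ascPochhammer ℝ x).eval (b + 1) * x.factorial)) :
    ∀ x : ℕ, ((x : ℝ) + 1) * ((x : ℝ) + 1 + b) * w (x + 1)
      = z * ((x : ℝ) + a1) * ((x : ℝ) + a2) * w x := by
  intro x
  have hsucc : ∀ s : ℝ, (ascPochhammer ℝ (x+1)).eval s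
      = (ascPochhammer ℝ x).eval s * (s + x) := by
    intro s
    rw [ascPochhammer_succ_right]
    simp [eval_mul]
  have hfac2 : ((x+1).factorial : ℝ) = (x.factorial : ℝ) * ((x:ℝ)+1) := by
    rw [Nat.factorial_succ]; push_cast; ring
  have hp1 : (0:ℝ) < (ascPochhammer ℝ x).eval (b + 1) :=
    ascPochhammer_pos x (b+1) (by linarith)
  have hfac : (0:ℝ) < (x.factorial : ℝ) := by positivity
  have hx0 : (0:ℝ) ≤ (x:ℝ) := Nat.cast_nonneg x
  rw [hw (x+1), hw x, hsucc, hsucc, hsucc, hfac2]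
  rw [← mul_div_assoc, ← mul_div_assoc]
  have hbx : (0:ℝ) < (b + 1) + (x:ℝ) := by linarith
  have h1 : (0:ℝ) < (ascPochhammer ℝ x).eval (b + 1) * ((b+1) + (x:ℝ)) * ((x.factorial:ℝ) * ((x:ℝ)+1)) := by positivity
  have h2 : (0:ℝ) < (ascPochhammer ℝ x).eval (b + 1) * (x.factorial:ℝ) := by positivity
  rw [div_eq_div_iff h1.ne' h2.ne']
  ring

lemma hahn_w_pos (a1 a2 b z : ℝ) (ha1 : 0 < a1) (ha2 : 0 < a2) (hb : -1 < b)
    (hz0 : 0 < z)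
    (w : ℕ → ℝ)
    (hw : ∀ x : ℕ, w x =
      (ascPochhammer ℝ x).eval a1 * (ascPochhammer ℝ x).eval a2 * z ^ x /
        ((ascPochhammer ℝ x).eval (b + 1) * x.factorial)) :
    ∀ x : ℕ, 0 < w x := by
  intro x
  rw [hw x]
  have h1 := ascPochhammer_pos x a1 ha1
  have h2 := ascPochhammer_pos x a2 ha2
  have h3 := ascPochhammer_pos x (b+1) (by linarith : (0:ℝ) < b + 1)
  have h4 : (0:ℝ) < (x.factorial : ℝ) := by positivity
  positivity

lemma hahn_summable_aux (a1 a2 b z : ℝ) (ha1 : 0 < a1) (ha2 : 0 < a2) (hb : -1 < b)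
    (hz0 : 0 < z) (hz1 : z < 1)
    (w : ℕ → ℝ) (hwpos : ∀ x, 0 < w x)
    (hws : ∀ x : ℕ, ((x : ℝ) + 1) * ((x : ℝ) + 1 + b) * w (x + 1)
      = z * ((x : ℝ) + a1) * ((x : ℝ) + a2) * w x) :
    ∀ d : ℕ, Summable (fun x : ℕ => ((x : ℝ) + 1) ^ d * w x) := by
  intro d
  have hxb : ∀ x : ℕ, (0:ℝ) < (x:ℝ) + 1 + b := by
    intro x; have : (0:ℝ) ≤ (x:ℝ) := Nat.cast_nonneg x; linarith
  have hx1 : ∀ x : ℕ, (0:ℝ) < (x:ℝ) + 1 := by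
    intro x; have : (0:ℝ) ≤ (x:ℝ) := Nat.cast_nonneg x; linarith
  set f : ℕ → ℝ := fun x => ((x : ℝ) + 1) ^ d * w x with hf
  set g : ℕ → ℝ := fun x =>
    (((x:ℝ) + 2) / ((x:ℝ) + 1)) ^ d *
      (z * (((x:ℝ) + a1) / ((x:ℝ) + 1)) * (((x:ℝ) + a2) / ((x:ℝ) + 1 + b))) with hg
  have hkey : ∀ x : ℕ, f (x + 1) = g x * f x := by
    intro x
    have hne1 : ((x:ℝ)+1) ≠ 0 := (hx1 x).ne'
    have hneb : ((x:ℝ)+1+b) ≠ 0 := (hxb x).ne'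
    have hgx : g x = ((x:ℝ)+2)^d * (z*((x:ℝ)+a1)*((x:ℝ)+a2)) /
        (((x:ℝ)+1)^d * (((x:ℝ)+1)*((x:ℝ)+1+b))) := by
      simp only [hg]
      rw [div_pow]
      field_simp
    have e1 : ((x+1 : ℕ) : ℝ) = (x:ℝ) + 1 := by push_cast; ring
    simp only [hf, hg] at hgx ⊢
    rw [hgx, e1]
    rw [div_mul_eq_mul_div, eq_div_iff (by positivity)]
    linear_combination (((x:ℝ)+2)^d * ((x:ℝ)+1)^d) * hws x
  have t0 : Filter.Tendsto (fun x : ℕ => 1 / ((x:ℝ) + 1)) Filter.atTop (nhds 0) :=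
    tendsto_one_div_add_atTop_nhds_zero_nat
  have t2 : Filter.Tendsto (fun x : ℕ => ((x:ℝ) + 2) / ((x:ℝ) + 1)) Filter.atTop (nhds 1) := by
    have h' : Filter.Tendsto (fun x : ℕ => (1:ℝ) + 1 / ((x:ℝ) + 1)) Filter.atTop (nhds (1+0)) :=
      tendsto_const_nhds.add t0
    rw [add_zero] at h'
    refine h'.congr fun x => ?_
    field_simp
    ring
  have t3 : Filter.Tendsto (fun x : ℕ => (((x:ℝ) + 2) / ((x:ℝ) + 1)) ^ d)
      Filter.atTop (nhds 1) := by
    have := t2.pow d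
    simpa using this
  have t4 : Filter.Tendsto (fun x : ℕ => ((x:ℝ) + a1) / ((x:ℝ) + 1)) Filter.atTop (nhds 1) := by
    have h' : Filter.Tendsto (fun x : ℕ => (1:ℝ) + (a1-1) * (1 / ((x:ℝ) + 1)))
        Filter.atTop (nhds (1 + (a1-1)*0)) := tendsto_const_nhds.add (t0.const_mul (a1-1))
    rw [show (1:ℝ) + (a1-1)*0 = 1 by ring] at h'
    refine h'.congr fun x => ?_
    field_simp
    ring
  have t5a : Filter.Tendsto (fun x : ℕ => ((x:ℝ) + 1 + b)) Filter.atTop Filter.atTop :=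
    Filter.tendsto_atTop_add_const_right _ b
      (Filter.tendsto_atTop_add_const_right _ 1 tendsto_natCast_atTop_atTop)
  have t5b : Filter.Tendsto (fun x : ℕ => ((x:ℝ) + 1 + b)⁻¹) Filter.atTop (nhds 0) :=
    t5a.inv_tendsto_atTop
  have t5 : Filter.Tendsto (fun x : ℕ => ((x:ℝ) + a2) / ((x:ℝ) + 1 + b))
      Filter.atTop (nhds 1) := by
    have h' : Filter.Tendsto (fun x : ℕ => (1:ℝ) + (a2-1-b) * ((x:ℝ) + 1 + b)⁻¹)
        Filter.atTop (nhds (1 + (a2-1-b)*0)) := tendsto_const_nhds.add (t5b.const_mul (a2-1-b))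
    rw [show (1:ℝ) + (a2-1-b)*0 = 1 by ring] at h'
    refine h'.congr fun x => ?_
    have hneb : ((x:ℝ)+1+b) ≠ 0 := (hxb x).ne'
    field_simp
    ring
  have tg : Filter.Tendsto g Filter.atTop (nhds z) := by
    have tg0 := t3.mul (((tendsto_const_nhds (x := z)).mul t4).mul t5)
    rw [show (1:ℝ) * (z * 1 * 1) = z by ring] at tg0
    exact tg0
  have hev : ∀ᶠ x in Filter.atTop, g x < (1 + z) / 2 :=
    tg.eventually_lt_const (by linarith)
  apply summable_of_ratio_norm_eventually_le (r := (1 + z) / 2) (by linarith)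
  filter_upwards [hev] with x hx
  have hfpos : ∀ y : ℕ, 0 < f y := fun y => mul_pos (by positivity) (hwpos y)
  rw [Real.norm_eq_abs, Real.norm_eq_abs, abs_of_pos (hfpos _), abs_of_pos (hfpos _)]
  rw [hkey x]
  have h1 := hfpos x
  nlinarith [hfpos x]

lemma hahn_summable_poly (w : ℕ → ℝ) (hwpos : ∀ x, 0 < w x)
    (hSd : ∀ d : ℕ, Summable (fun x : ℕ => ((x : ℝ) + 1) ^ d * w x)) :
    ∀ q : Polynomial ℝ, Summable (fun x : ℕ => q.eval (x : ℝ) * w x) := by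
  intro q
  set d := q.natDegree with hd
  set Cq : ℝ := ∑ j ∈ Finset.range (d+1), |q.coeff j| with hC
  have hbound : ∀ x : ℕ, ‖q.eval (x:ℝ) * w x‖ ≤ Cq * (((x:ℝ)+1)^d * w x) := by
    intro x
    rw [Real.norm_eq_abs, abs_mul, abs_of_pos (hwpos x)]
    have h1 : |q.eval (x:ℝ)| ≤ Cq * ((x:ℝ)+1)^d := by
      rw [Polynomial.eval_eq_sum_range]
      refine le_trans (Finset.abs_sum_le_sum_abs _ _) ?_
      rw [hC, Finset.sum_mul]
      apply Finset.sum_le_sum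
      intro j hj
      rw [abs_mul, abs_pow, Nat.abs_cast]
      have hx0 : (0:ℝ) ≤ (x:ℝ) := Nat.cast_nonneg x
      have h2 : ((x:ℝ))^j ≤ ((x:ℝ)+1)^j := pow_le_pow_left₀ hx0 (by linarith) j
      have h3 : ((x:ℝ)+1)^j ≤ ((x:ℝ)+1)^d :=
        pow_le_pow_right₀ (by linarith) (Nat.lt_succ_iff.mp (Finset.mem_range.mp hj))
      have := mul_le_mul_of_nonneg_left (le_trans h2 h3) (abs_nonneg (q.coeff j))
      linarith
    calc |q.eval (x:ℝ)| * w x ≤ (Cq * ((x:ℝ)+1)^d) * w x :=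
          mul_le_mul_of_nonneg_right h1 (le_of_lt (hwpos x))
      _ = Cq * (((x:ℝ)+1)^d * w x) := by ring
  exact Summable.of_norm_bounded ((hSd d).mul_left Cq) hbound

/-- for the generalized Hahn polynomials of type I,
A₀(n) = Δₙ[(uₙ − z vₙ)γₙ] = (u_{n+1} − z v_{n+1})γ_{n+1} − (uₙ − z vₙ)γₙ. -/
theorem generalized_hahn_A_zero
    (a1 a2 b z : ℝ) (ha1 : 0 < a1) (ha2 : 0 < a2) (hb : -1 < b)
    (hz0 : 0 < z) (hz1 : z < 1)
    (w : ℕ → ℝ)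
    (hw : ∀ x : ℕ, w x =
      (ascPochhammer ℝ x).eval a1 * (ascPochhammer ℝ x).eval a2 * z ^ x /
        ((ascPochhammer ℝ x).eval (b + 1) * x.factorial))
    (P : ℕ → Polynomial ℝ) (h : ℕ → ℝ)
    (hmonic : ∀ n, (P n).Monic) (hdeg : ∀ n, (P n).natDegree = n)
    (hh : ∀ n, h n ≠ 0)
    (horth : ∀ n m : ℕ,
      (∑' x : ℕ, (P n * P m).eval (x : ℝ) * w x) = if n = m then h n else 0)
    (β γ : ℕ → ℝ) (hγ0 : γ 0 = 0)
    (hrec : ∀ n : ℕ, X * P n = P (n + 1) + C (β n) * P n + C (γ n) * P (n - 1))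
    (u v : ℕ → ℝ)
    (hu : ∀ n : ℕ, 1 ≤ n → u n = β n + β (n - 1) - (n : ℝ) + b + 1)
    (hv : ∀ n : ℕ, 1 ≤ n → v n = β n + β (n - 1) + (n : ℝ) - 1 + a1 + a2)
    (A : ℕ → ℤ → ℝ)
    (hA : ∀ n : ℕ,
      C z * (X + C a1) * (X + C a2) * (P n).comp (X + 1) =
        ∑ k ∈ Finset.Icc (max (-(n : ℤ)) (-2)) 2,
          A n k • P ((n : ℤ) + k).toNat) :
    ∀ n : ℕ, A n 0 =
      (u (n + 1) - z * v (n + 1)) * γ (n + 1) - (u n - z * v n) * γ n := by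
  have hws := hahn_w_succ a1 a2 b z ha1 ha2 hb w hw
  have hwpos := hahn_w_pos a1 a2 b z ha1 ha2 hb hz0 w hw
  have hSum : ∀ q : Polynomial ℝ, Summable (fun x : ℕ => q.eval (x : ℝ) * w x) :=
    hahn_summable_poly w hwpos (hahn_summable_aux a1 a2 b z ha1 ha2 hb hz0 hz1 w hwpos hws)
  set lam : Polynomial ℝ := C z * (X + C a1) * (X + C a2) with hlam
  set phi : Polynomial ℝ := X * (X + C b) with hphi
  set L : Polynomial ℝ → ℝ := fun q => ∑' x : ℕ, q.eval (x : ℝ) * w x with hLdef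
  have horth' : ∀ i j : ℕ, L (P i * P j) = if i = j then h i else 0 := horth
  have L0 : L 0 = 0 := by simp [hLdef]
  have Ladd : ∀ p q : Polynomial ℝ, L (p + q) = L p + L q := by
    intro p q
    simp only [hLdef, eval_add, add_mul]
    exact Summable.tsum_add (hSum p) (hSum q)
  have Lsub : ∀ p q : Polynomial ℝ, L (p - q) = L p - L q := by
    intro p q
    simp only [hLdef, eval_sub, sub_mul]
    exact Summable.tsum_sub (hSum p) (hSum q)
  have LCmul : ∀ (c : ℝ) (p : Polynomial ℝ), L (C c * p) = c * L p := by
    intro c p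
    simp only [hLdef, eval_mul, eval_C, mul_assoc]
    exact tsum_mul_left
  have hcoefP : ∀ m : ℕ, (P m).coeff m = 1 := fun m => by
    have := (hmonic m).coeff_natDegree
    rwa [hdeg m] at this
  have hcoefhi : ∀ m k : ℕ, m < k → (P m).coeff k = 0 := fun m k hk =>
    coeff_eq_zero_of_natDegree_lt (by rwa [hdeg m])
  have hP0 : P 0 = 1 := ((hmonic 0).natDegree_eq_zero).mp (hdeg 0)
  -- orthogonality against lower degree polynomials
  have orthLow : ∀ (m : ℕ) (r : Polynomial ℝ), (∀ k, m ≤ k → r.coeff k = 0) →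
      L (P m * r) = 0 := by
    have key : ∀ (N m : ℕ) (r : Polynomial ℝ), r.natDegree ≤ N →
        (∀ k, m ≤ k → r.coeff k = 0) → L (P m * r) = 0 := by
      intro N
      induction N with
      | zero =>
        intro m r hrd hrc
        have hr : r = C (r.coeff 0) := Polynomial.eq_C_of_natDegree_le_zero hrd
        match m with
        | 0 =>
          have : r = 0 := by rw [hr, hrc 0 le_rfl, map_zero]
          rw [this, mul_zero, L0]
        | m + 1 =>
          rw [hr, mul_comm, LCmul]
          have : L (P (m + 1)) = 0 := by
            have h1 : P (m + 1) * P 0 = P (m + 1) := by rw [hP0, mul_one]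
            have h2 := horth' (m + 1) 0
            rw [h1, if_neg (Nat.succ_ne_zero m)] at h2
            exact h2
          rw [this, mul_zero]
      | succ N ih =>
        intro m r hrd hrc
        by_cases hm : N + 1 < m
        · set c := r.coeff (N + 1) with hc
          set r' := r - C c * P (N + 1) with hr'
          have hr'd : r'.natDegree ≤ N := by
            rw [Polynomial.natDegree_le_iff_coeff_eq_zero]
            intro k hk
            rw [hr', Polynomial.coeff_sub, Polynomial.coeff_C_mul]
            rcases Nat.lt_or_ge (N + 1) k with hk2 | hk2
            · rw [Polynomial.coeff_eq_zero_of_natDegree_lt (lt_of_le_of_lt hrd hk2),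
                hcoefhi (N + 1) k hk2, mul_zero, sub_zero]
            · have : k = N + 1 := le_antisymm hk2 hk
              subst this
              rw [hcoefP (N + 1), mul_one, hc, sub_self]
          have hr'c : ∀ k, m ≤ k → r'.coeff k = 0 := by
            intro k hk
            have hk1 : N + 1 < k := lt_of_lt_of_le hm hk
            rw [hr', Polynomial.coeff_sub, Polynomial.coeff_C_mul, hrc k hk,
              hcoefhi (N + 1) k hk1, mul_zero, sub_zero]
          have hsplit : r = C c * P (N + 1) + r' := by rw [hr']; ring
          rw [hsplit, mul_add, Ladd, mul_left_comm, LCmul]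
          rw [ih m r' hr'd hr'c]
          have h2 := horth' m (N + 1)
          rw [if_neg (by omega)] at h2
          rw [h2, mul_zero, add_zero]
        · apply ih m r _ hrc
          rw [Polynomial.natDegree_le_iff_coeff_eq_zero]
          intro k hk
          exact hrc k (by omega)
    intro m r hrc
    exact key r.natDegree m r le_rfl hrc
  -- pairing lemma
  have pairing : ∀ (m : ℕ) (q : Polynomial ℝ), q.natDegree ≤ m + 1 →
      L (P m * q) = (q.coeff m - q.coeff (m + 1) * (P (m + 1)).coeff m) * h m := by
    intro m q hq
    set α := q.coeff m - q.coeff (m + 1) * (P (m + 1)).coeff m with hα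
    set r := q - C (q.coeff (m + 1)) * P (m + 1) - C α * P m with hr
    have hrc : ∀ k, m ≤ k → r.coeff k = 0 := by
      intro k hk
      rw [hr]
      simp only [Polynomial.coeff_sub, Polynomial.coeff_C_mul]
      rcases Nat.lt_or_ge k (m + 1) with hk1 | hk1
      · have hkm : k = m := by omega
        rw [hkm, hcoefP m, hα]
        ring
      rcases Nat.lt_or_ge k (m + 2) with hk2 | hk2
      · have hkm : k = m + 1 := by omega
        rw [hkm, hcoefP (m + 1), hcoefhi m (m + 1) (Nat.lt_succ_self m), mul_one, mul_zero]
        ring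
      · rw [Polynomial.coeff_eq_zero_of_natDegree_lt (lt_of_le_of_lt hq (by omega)),
          hcoefhi (m + 1) k (by omega), hcoefhi m k (by omega), mul_zero, mul_zero]
        ring
    have hsplit : q = C (q.coeff (m + 1)) * P (m + 1) + C α * P m + r := by rw [hr]; ring
    rw [hsplit, mul_add, mul_add, Ladd, Ladd, mul_left_comm, LCmul, mul_left_comm, LCmul]
    rw [orthLow m r hrc]
    have h1 := horth' m (m + 1)
    rw [if_neg (by omega)] at h1
    rw [h1]
    have h2 := horth' m m
    rw [if_pos rfl] at h2
    rw [h2]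
    ring
  -- h recursion
  have hγh : ∀ m : ℕ, γ (m + 1) * h m = h (m + 1) := by
    intro m
    have e1 : L (P (m + 1) * (X * P m)) = h (m + 1) := by
      rw [hrec m, mul_add, mul_add, Ladd, Ladd, mul_left_comm, LCmul, mul_left_comm, LCmul]
      have t1 := horth' (m + 1) (m + 1); rw [if_pos rfl] at t1
      have t2 := horth' (m + 1) m; rw [if_neg (by omega)] at t2
      have t3 := horth' (m + 1) (m - 1); rw [if_neg (by omega)] at t3
      rw [t1, t2, t3, mul_zero, mul_zero]
      ring
    have e2 : L (P (m + 1) * (X * P m)) = γ (m + 1) * h m := by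
      have hcomm : P (m + 1) * (X * P m) = P m * (X * P (m + 1)) := by ring
      rw [hcomm, hrec (m + 1)]
      have hsub : (m + 1 + 1 : ℕ) - 1 = m + 1 := rfl
      have hsub2 : (m + 1 : ℕ) - 1 = m := rfl
      rw [hsub2, mul_add, mul_add, Ladd, Ladd, mul_left_comm, LCmul, mul_left_comm, LCmul]
      have t1 := horth' m (m + 2); rw [if_neg (by omega)] at t1
      have t2 := horth' m (m + 1); rw [if_neg (by omega)] at t2
      have t3 := horth' m m; rw [if_pos rfl] at t3
      rw [t1, t2, t3, mul_zero, add_zero]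
      ring
    rw [← e1, e2]
  -- Pearson
  have pearson : ∀ g : Polynomial ℝ, L (phi * g) = L (lam * g.comp (X + 1)) := by
    intro g
    simp only [hLdef]
    rw [Summable.tsum_eq_zero_add (hSum (phi * g))]
    have h0 : (phi * g).eval ((0 : ℕ) : ℝ) * w 0 = 0 := by
      simp [hphi]
    rw [h0, zero_add]
    apply tsum_congr
    intro x
    have e1 : ((x + 1 : ℕ) : ℝ) = (x : ℝ) + 1 := by push_cast; ring
    rw [e1]
    simp only [hphi, hlam, eval_mul, eval_add, eval_X, eval_C, eval_comp, eval_one]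
    linear_combination g.eval ((x : ℝ) + 1) * hws x
  -- extraction of A n 0
  have hA0 : ∀ m : ℕ, L (lam * (P m).comp (X + 1) * P m) = A m 0 * h m := by
    intro m
    have step1 : lam * (P m).comp (X + 1) * P m =
        ∑ k ∈ Finset.Icc (max (-(m : ℤ)) (-2)) 2, C (A m k) * (P ((m : ℤ) + k).toNat * P m) := by
      rw [hA m, Finset.sum_mul]
      apply Finset.sum_congr rfl
      intro k _
      rw [smul_eq_C_mul]
      ring
    rw [step1]
    have Lsum : ∀ (s : Finset ℤ) (f : ℤ → Polynomial ℝ),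
        L (∑ k ∈ s, f k) = ∑ k ∈ s, L (f k) := by
      intro s f
      induction s using Finset.induction with
      | empty => simpa using L0
      | insert x s hx ih =>
        rw [Finset.sum_insert hx, Finset.sum_insert hx, Ladd, ih]
    rw [Lsum]
    have hterm : ∀ k ∈ Finset.Icc (max (-(m : ℤ)) (-2)) 2, k ≠ 0 →
        L (C (A m k) * (P ((m : ℤ) + k).toNat * P m)) = 0 := by
      intro k hk hk0
      rw [LCmul]
      have hmem := Finset.mem_Icc.mp hk
      have hge : (0 : ℤ) ≤ (m : ℤ) + k := by
        have := le_trans (le_max_left _ _) hmem.1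
        omega
      have hne : ((m : ℤ) + k).toNat ≠ m := by omega
      rw [horth' _ m, if_neg hne, mul_zero]
    rw [Finset.sum_eq_single_of_mem 0 (by
      rw [Finset.mem_Icc]
      constructor
      · apply max_le <;> omega
      · omega) hterm]
    rw [LCmul]
    have : ((m : ℤ) + 0).toNat = m := by omega
    rw [this, horth' m m, if_pos rfl]
  -- coefficient facts
  have hc0 : (P 1).coeff 0 = -β 0 := by
    have e := congrArg (fun p : Polynomial ℝ => p.coeff 0) (hrec 0)
    simp [hP0, hγ0] at e
    linarith [e]
  have hcS : ∀ j : ℕ, (P (j + 2)).coeff (j + 1) = (P (j + 1)).coeff j - β (j + 1) := by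
    intro j
    have e := congrArg (fun p : Polynomial ℝ => p.coeff (j + 1)) (hrec (j + 1))
    simp only [Polynomial.coeff_X_mul, Polynomial.coeff_add, Polynomial.coeff_C_mul,
      Nat.add_sub_cancel] at e
    rw [hcoefP (j + 1), hcoefhi j (j + 1) (Nat.lt_succ_self j)] at e
    rw [show j + 1 + 1 = j + 2 from rfl] at e
    linarith [e]
  have compTop : ∀ (j : ℕ) (t : ℝ), ((P j).comp (X + C t)).coeff j = 1 := by
    intro j t
    have h1 : ((P j).comp (X + C t)).natDegree = j := by
      rw [Polynomial.natDegree_comp, Polynomial.natDegree_X_add_C, hdeg, mul_one]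
    have h2 : ((P j).comp (X + C t)).Monic := (hmonic j).comp_X_add_C t
    have := h2.coeff_natDegree
    rwa [h1] at this
  have compSub : ∀ (j : ℕ) (t : ℝ),
      ((P (j + 1)).comp (X + C t)).coeff j = (P (j + 1)).coeff j + t * (j + 1) := by
    intro j t
    rw [← Polynomial.taylor_apply, Polynomial.taylor_coeff]
    have hQd : (Polynomial.hasseDeriv j (P (j + 1))).natDegree < 2 := by
      have := Polynomial.natDegree_hasseDeriv_le (P (j + 1)) j
      rw [hdeg (j + 1)] at this
      omega
    rw [Polynomial.eval_eq_sum_range' hQd]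
    rw [Finset.sum_range_succ, Finset.sum_range_one]
    rw [Polynomial.hasseDeriv_coeff, Polynomial.hasseDeriv_coeff]
    simp only [zero_add, Nat.choose_self, Nat.cast_one, one_mul, pow_zero, mul_one, pow_one]
    rw [show 1 + j = j + 1 from by omega, Nat.choose_succ_self_right, hcoefP (j + 1)]
    push_cast
    ring
  -- the Casoratian
  set Wc : ℕ → Polynomial ℝ := fun m =>
    (P m).comp (X + 1) * P (m - 1) - (P (m - 1)).comp (X + 1) * P m with hWc
  have hW0 : Wc 0 = 0 := by simp [hWc]
  have hWrec : ∀ m : ℕ, Wc (m + 1) = (P m).comp (X + 1) * P m + C (γ m) * Wc m := by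
    intro m
    have hPm1 : P (m + 1) = X * P m - C (β m) * P m - C (γ m) * P (m - 1) := by
      linear_combination -(hrec m)
    have hPm1c : (P (m + 1)).comp (X + 1) = (X + 1) * (P m).comp (X + 1)
        - C (β m) * (P m).comp (X + 1) - C (γ m) * (P (m - 1)).comp (X + 1) := by
      rw [hPm1]
      simp [Polynomial.sub_comp, Polynomial.mul_comp, Polynomial.X_comp, Polynomial.C_comp]
    simp only [hWc, Nat.add_sub_cancel]
    linear_combination P m * hPm1c - (P m).comp (X + 1) * hPm1
  have Dtele : ∀ m : ℕ, L (lam * Wc (m + 1)) = A m 0 * h m + γ m * L (lam * Wc m) := by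
    intro m
    rw [hWrec m]
    have e : lam * ((P m).comp (X + 1) * P m + C (γ m) * Wc m) =
        lam * (P m).comp (X + 1) * P m + C (γ m) * (lam * Wc m) := by ring
    rw [e, Ladd, LCmul, hA0 m]
  have hC1 : (X + 1 : Polynomial ℝ) = X + C 1 := by rw [Polynomial.C_1]
  have core : ∀ (j : ℕ) (cs cs' : ℝ),
      (X * ((P j).comp (X + C (-1)))).coeff j = cs →
      (X * ((P j).comp (X + C 1))).coeff j = cs' →
      L (lam * Wc (j + 1)) =
        ((cs + b - (P (j + 2)).coeff (j + 1)) -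
          (z * cs' + z * (a1 + a2) - z * (P (j + 2)).coeff (j + 1))) * h (j + 1) := by
    intro j cs cs' hcs hcs'
    have hsd : ((P j).comp (X + C (-1))).natDegree = j := by
      rw [Polynomial.natDegree_comp, Polynomial.natDegree_X_add_C, hdeg, mul_one]
    have hs'd : ((P j).comp (X + C 1)).natDegree = j := by
      rw [Polynomial.natDegree_comp, Polynomial.natDegree_X_add_C, hdeg, mul_one]
    have hstop : ((P j).comp (X + C (-1))).coeff j = 1 := compTop j (-1)
    have hs'top : ((P j).comp (X + C 1)).coeff j = 1 := compTop j 1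
    have hshi : ∀ k, j < k → ((P j).comp (X + C (-1))).coeff k = 0 := fun k hk =>
      Polynomial.coeff_eq_zero_of_natDegree_lt (by rw [hsd]; exact hk)
    have hs'hi : ∀ k, j < k → ((P j).comp (X + C 1)).coeff k = 0 := fun k hk =>
      Polynomial.coeff_eq_zero_of_natDegree_lt (by rw [hs'd]; exact hk)
    have hsplit : lam * Wc (j + 1) =
        lam * ((P (j + 1)).comp (X + 1) * P j) - lam * ((P j).comp (X + 1) * P (j + 1)) := by
      simp only [hWc, Nat.add_sub_cancel]; ring
    rw [hsplit, Lsub]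
    -- Term1 via Pearson
    have hXC : (X + C (-1) : Polynomial ℝ).comp (X + 1) = X := by
      simp only [Polynomial.add_comp, Polynomial.X_comp, Polynomial.C_comp]
      have : (C (-1) : Polynomial ℝ) = -1 := by simp
      rw [this]; ring
    have hG : (P (j + 1) * ((P j).comp (X + C (-1)))).comp (X + 1) =
        (P (j + 1)).comp (X + 1) * P j := by
      rw [Polynomial.mul_comp, Polynomial.comp_assoc, hXC, Polynomial.comp_X]
    have hT1 : L (lam * ((P (j + 1)).comp (X + 1) * P j)) =
        L (phi * (P (j + 1) * ((P j).comp (X + C (-1))))) := by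
      rw [pearson (P (j + 1) * ((P j).comp (X + C (-1)))), hG]
    rw [hT1]
    have e1 : phi * (P (j + 1) * ((P j).comp (X + C (-1)))) =
        P (j + 1) * (phi * ((P j).comp (X + C (-1)))) := by ring
    rw [e1]
    have hq1d : (phi * ((P j).comp (X + C (-1)))).natDegree ≤ (j + 1) + 1 := by
      refine le_trans Polynomial.natDegree_mul_le ?_
      have hdphi : phi.natDegree ≤ 2 := by
        rw [hphi]
        refine le_trans Polynomial.natDegree_mul_le ?_
        have h2 : (X + C b : Polynomial ℝ).natDegree ≤ 1 := le_of_eq (Polynomial.natDegree_X_add_C b)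
        have h1 : (X : Polynomial ℝ).natDegree ≤ 1 := le_of_eq Polynomial.natDegree_X
        omega
      rw [hsd]; omega
    rw [pairing (j + 1) _ hq1d]
    -- Term2 pairing
    have e2 : lam * ((P j).comp (X + 1) * P (j + 1)) =
        P (j + 1) * (lam * ((P j).comp (X + C 1))) := by
      rw [hC1]; ring
    rw [e2]
    have hq2d : (lam * ((P j).comp (X + C 1))).natDegree ≤ (j + 1) + 1 := by
      refine le_trans Polynomial.natDegree_mul_le ?_
      have hdlam : lam.natDegree ≤ 2 := by
        rw [hlam]
        refine le_trans Polynomial.natDegree_mul_le ?_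
        have h1 : (C z * (X + C a1) : Polynomial ℝ).natDegree ≤ 1 := by
          refine le_trans Polynomial.natDegree_mul_le ?_
          simp [Polynomial.natDegree_X_add_C]
        have h2 : (X + C a2 : Polynomial ℝ).natDegree ≤ 1 :=
          le_of_eq (Polynomial.natDegree_X_add_C a2)
        omega
      rw [hs'd]; omega
    rw [pairing (j + 1) _ hq2d]
    -- coefficients of phi * s
    have hphis : phi * ((P j).comp (X + C (-1))) =
        X * (X * ((P j).comp (X + C (-1)))) + C b * (X * ((P j).comp (X + C (-1)))) := by
      rw [hphi]; ring
    have c1top : (phi * ((P j).comp (X + C (-1)))).coeff (j + 2) = 1 := by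
      rw [hphis, Polynomial.coeff_add, Polynomial.coeff_C_mul]
      have e3 : (X * (X * ((P j).comp (X + C (-1))))).coeff (j + 2) = 1 := by
        have t2 : (X * ((P j).comp (X + C (-1)))).coeff (j + 1) = 1 := by
          rw [Polynomial.coeff_X_mul, hstop]
        have t1 := Polynomial.coeff_X_mul (X * ((P j).comp (X + C (-1)))) (j + 1)
        rw [t2] at t1
        exact t1
      have e4 : (X * ((P j).comp (X + C (-1)))).coeff (j + 2) = 0 := by
        have t1 := Polynomial.coeff_X_mul ((P j).comp (X + C (-1))) (j + 1)
        rw [hshi (j + 1) (by omega)] at t1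
        exact t1
      rw [e3, e4, mul_zero, add_zero]
    have c1sub : (phi * ((P j).comp (X + C (-1)))).coeff (j + 1) = cs + b := by
      rw [hphis, Polynomial.coeff_add, Polynomial.coeff_C_mul]
      rw [Polynomial.coeff_X_mul, Polynomial.coeff_X_mul, hcs, hstop, mul_one]
    -- coefficients of lam * s'
    have hlams : lam * ((P j).comp (X + C 1)) =
        X * (X * (C z * ((P j).comp (X + C 1)))) +
          C (z * (a1 + a2)) * (X * ((P j).comp (X + C 1))) +
          C (z * (a1 * a2)) * ((P j).comp (X + C 1)) := by
      simp only [hlam, Polynomial.C_mul, Polynomial.C_add]; ring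
    have c2top : (lam * ((P j).comp (X + C 1))).coeff (j + 2) = z := by
      rw [hlams, Polynomial.coeff_add, Polynomial.coeff_add, Polynomial.coeff_C_mul,
        Polynomial.coeff_C_mul]
      have e3 : (X * (X * (C z * ((P j).comp (X + C 1))))).coeff (j + 2) = z := by
        have t2 : (X * (C z * ((P j).comp (X + C 1)))).coeff (j + 1) = z := by
          rw [Polynomial.coeff_X_mul, Polynomial.coeff_C_mul, hs'top, mul_one]
        have t1 := Polynomial.coeff_X_mul (X * (C z * ((P j).comp (X + C 1)))) (j + 1)
        rw [t2] at t1
        exact t1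
      have e4 : (X * ((P j).comp (X + C 1))).coeff (j + 2) = 0 := by
        have t1 := Polynomial.coeff_X_mul ((P j).comp (X + C 1)) (j + 1)
        rw [hs'hi (j + 1) (by omega)] at t1
        exact t1
      rw [e3, e4, hs'hi (j + 2) (by omega), mul_zero, mul_zero, add_zero, add_zero]
    have c2sub : (lam * ((P j).comp (X + C 1))).coeff (j + 1) = z * cs' + z * (a1 + a2) := by
      rw [hlams, Polynomial.coeff_add, Polynomial.coeff_add, Polynomial.coeff_C_mul,
        Polynomial.coeff_C_mul]
      have e3 : (X * (X * (C z * ((P j).comp (X + C 1))))).coeff (j + 1) = z * cs' := by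
        rw [Polynomial.coeff_X_mul]
        have t2 : (X * (C z * ((P j).comp (X + C 1)))).coeff j
            = (C z * (X * ((P j).comp (X + C 1)))).coeff j := by
          rw [mul_left_comm]
        rw [t2, Polynomial.coeff_C_mul, hcs']
      rw [e3, Polynomial.coeff_X_mul, hs'top, hs'hi (j + 1) (by omega), mul_one, mul_zero,
        add_zero]
    rw [c1top, c1sub, c2top, c2sub]
    ring
  have Dval : ∀ j : ℕ, L (lam * Wc (j + 1)) = (u (j + 1) - z * v (j + 1)) * h (j + 1) := by
    intro j
    cases j with
    | zero =>
      have hcs : (X * ((P 0).comp (X + C (-1)))).coeff 0 = 0 := by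
        rw [Polynomial.mul_coeff_zero, Polynomial.coeff_X_zero, zero_mul]
      have hcs' : (X * ((P 0).comp (X + C 1))).coeff 0 = 0 := by
        rw [Polynomial.mul_coeff_zero, Polynomial.coeff_X_zero, zero_mul]
      rw [core 0 0 0 hcs hcs']
      have hc2 : (P 2).coeff 1 = (P 1).coeff 0 - β 1 := hcS 0
      rw [hc2, hc0, hu 1 le_rfl, hv 1 le_rfl]
      simp only [show (1:ℕ) - 1 = 0 from rfl, Nat.cast_one]
      ring
    | succ i =>
      have hcs : (X * ((P (i + 1)).comp (X + C (-1)))).coeff (i + 1)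
          = (P (i + 1)).coeff i + (-1) * (i + 1) := by
        rw [Polynomial.coeff_X_mul, compSub i (-1)]
      have hcs' : (X * ((P (i + 1)).comp (X + C 1))).coeff (i + 1)
          = (P (i + 1)).coeff i + 1 * (i + 1) := by
        rw [Polynomial.coeff_X_mul, compSub i 1]
      rw [core (i + 1) _ _ hcs hcs']
      have hc2 : (P (i + 1 + 2)).coeff (i + 1 + 1) = (P (i + 1)).coeff i - β (i + 1) - β (i + 2) := by
        have t1 := hcS (i + 1)
        have t2 := hcS i
        rw [show i + 1 + 2 = i + 3 from rfl] at *
        rw [t1, t2]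
      rw [hc2, hu (i + 2) (by omega), hv (i + 2) (by omega)]
      rw [show (i + 2 : ℕ) - 1 = i + 1 from rfl]
      push_cast
      ring
  intro n
  have key : A n 0 * h n = ((u (n + 1) - z * v (n + 1)) * γ (n + 1) -
      (u n - z * v n) * γ n) * h n := by
    have k1 := Dtele n
    rw [Dval n] at k1
    have k3 : γ n * L (lam * Wc n) = (u n - z * v n) * γ n * h n := by
      cases n with
      | zero => rw [hγ0]; ring
      | succ m => rw [Dval m]; ring
    rw [k3, ← hγh n] at k1
    linear_combination -k1
  have := mul_right_cancel₀ (hh n) key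
  exact this
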